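/- Suppose ν : ℝ → ℝ and ξ : ℝ → ℝ are C³ with ν''' ≡ 0 and ξ''' ≡ 0, ν'' is a nonzero constant, and f : ℝ → ℝ is C³ with f'(x) ≠ 0 for all x. If the differential equation ξ''(x) · (f''(x)/f'(x)) + (−2ν''·f''(x)·f'(x) + ν'(y−f(x))·f'''(x) − ν'(y−f(x))·(f''(x))²/f'(x)) = 0 holds for all (x, y) ∈ ℝ², then f'' ≡ 0, i.e., f is affine. -/

import Mathlib

theorem stmt_7 (ν ξ f : ℝ → ℝ) (K : ℝ)
    (hν : ContDiff ℝ 3 ν) (hξ : ContDiff ℝ 3 ξ) (hf : ContDiff ℝ 3 f)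
    (hν''' : ∀ t, deriv (deriv (deriv ν)) t = 0)
    (hξ''' : ∀ t, deriv (deriv (deriv ξ)) t = 0)
    (hK : K ≠ 0) (hν'' : ∀ t, deriv (deriv ν) t = K)
    (hf' : ∀ x, deriv f x ≠ 0)
    (hode : ∀ x y : ℝ,
        deriv (deriv ξ) x * (deriv (deriv f) x / deriv f x) +
          (-(2 * K * deriv (deriv f) x * deriv f x) +
            deriv ν (y - f x) * deriv (deriv (deriv f)) x -
            deriv ν (y - f x) * (deriv (deriv f) x) ^ 2 / deriv f x) = 0) :
    ∀ x, deriv (deriv f) x = 0 := by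
  -- differentiability facts
  have hf2 : ContDiff ℝ 2 (deriv f) :=
    ((contDiff_succ_iff_deriv (n := 2)).mp (by exact_mod_cast hf)).2.2
  have hf3 : ContDiff ℝ 1 (deriv (deriv f)) :=
    ((contDiff_succ_iff_deriv (n := 1)).mp (by exact_mod_cast hf2)).2.2
  have hd2 : Differentiable ℝ (deriv f) := hf2.differentiable (by norm_num)
  have hd3 : Differentiable ℝ (deriv (deriv f)) := hf3.differentiable one_ne_zero
  have hν2 : Differentiable ℝ (deriv ν) :=
    (((contDiff_succ_iff_deriv (n := 2)).mp (by exact_mod_cast hν)).2.2).differentiable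
      (by norm_num)
  have hd2' : ∀ x, HasDerivAt (deriv f) (deriv (deriv f) x) x := fun x => (hd2 x).hasDerivAt
  have hd3' : ∀ x, HasDerivAt (deriv (deriv f)) (deriv (deriv (deriv f)) x) x :=
    fun x => (hd3 x).hasDerivAt
  -- ν' is affine: deriv ν 1 = deriv ν 0 + K
  have hνaff : deriv ν 1 = deriv ν 0 + K := by
    have hconst : ∀ s t : ℝ, deriv ν s - K * s = deriv ν t - K * t := by
      apply is_const_of_deriv_eq_zero
      · exact hν2.sub (differentiable_const K |>.mul differentiable_id)
      · intro t
        rw [deriv_fun_sub (hν2 t) (by fun_prop)]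
        rw [hν'' t, deriv_const_mul_field]
        simp
    have := hconst 1 0
    simp at this; linarith
  -- key: f''' * f' = f''^2
  have hA : ∀ x, deriv (deriv (deriv f)) x * deriv f x = (deriv (deriv f) x) ^ 2 := by
    intro x
    have h1 := hode x (f x + 1)
    have h2 := hode x (f x)
    simp only [add_sub_cancel_left, sub_self] at h1 h2
    rw [hνaff] at h1
    have hfx := hf' x
    field_simp at h1 h2
    have h3 : K * (deriv (deriv (deriv f)) x * deriv f x - (deriv (deriv f) x) ^ 2) = 0 := by
      linear_combination h1 - h2
    have h4 := (mul_eq_zero.mp h3).resolve_left hK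
    linarith
  -- f''/f' is constant
  set c := deriv (deriv f) 0 / deriv f 0 with hc
  have hgc : ∀ x, deriv (deriv f) x = c * deriv f x := by
    have hconst : ∀ s t : ℝ, deriv (deriv f) s / deriv f s = deriv (deriv f) t / deriv f t := by
      apply is_const_of_deriv_eq_zero
      · exact hd3.div hd2 hf'
      · intro x
        have h : HasDerivAt (fun t => deriv (deriv f) t / deriv f t)
            ((deriv (deriv (deriv f)) x * deriv f x -
              deriv (deriv f) x * deriv (deriv f) x) / (deriv f x) ^ 2) x :=
          (hd3' x).div (hd2' x) (hf' x)
        rw [h.deriv, hA x]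
        ring_nf
    intro x
    have h := hconst x 0
    rw [← hc] at h
    have hfx := hf' x
    field_simp at h
    linarith
  -- main case split
  by_cases hc0 : c = 0
  · intro x; rw [hgc x, hc0, zero_mul]
  · exfalso
    -- ξ'' x = 2 K (f' x)^2 for all x
    have hE : ∀ x, deriv (deriv ξ) x = 2 * K * (deriv f x) ^ 2 := by
      intro x
      have h2 := hode x (f x)
      simp only [sub_self] at h2
      have hfx := hf' x
      have hAx := hA x
      have hgx := hgc x
      field_simp at h2
      have key : (c * deriv f x) * deriv (deriv ξ) x
          = (c * deriv f x) * (2 * K * (deriv f x) ^ 2) := by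
        linear_combination h2 - deriv ν 0 * hAx
          - (deriv (deriv ξ) x - 2 * K * (deriv f x) ^ 2) * hgx
      exact mul_left_cancel₀ (mul_ne_zero hc0 hfx) key
    -- differentiate: 0 = 4 K c (f' 0)^2 ≠ 0
    have hD : HasDerivAt (fun x => 2 * K * (deriv f x) ^ 2)
        (2 * K * (2 * deriv f 0 * deriv (deriv f) 0)) 0 := by
      have h := (hd2' 0).fun_pow 2
      have h' := h.const_mul (2 * K)
      exact h'.congr_deriv (by ring)
    have heq : deriv (deriv ξ) = fun x => 2 * K * (deriv f x) ^ 2 := funext hE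
    have hzero : deriv (deriv (deriv ξ)) 0 = 2 * K * (2 * deriv f 0 * deriv (deriv f) 0) := by
      rw [heq]; exact hD.deriv
    rw [hξ''' 0] at hzero
    have hg0 := hgc 0
    have hfx := hf' 0
    apply hc0
    have h1 : K * c * (deriv f 0 * deriv f 0) = 0 := by
      rw [hg0] at hzero; linarith [hzero]
    rcases mul_eq_zero.mp h1 with h | h
    · rcases mul_eq_zero.mp h with h | h
      · exact absurd h hK
      · exact h
    · exact absurd h (mul_ne_zero hfx hfx)
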